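/- For every uncountable abelian group G whose subgroup B(G) = {g ∈ G : 2g = 0} satisfies |B(G)| < |G|, there exists a 2-coloring of G admitting no monochromatic symmetric subset of cardinality |G|. -/

import Mathlib

open Cardinal Set

-- involution coloring
lemma stmt6_invol_coloring {Q : Type*} (f : Q → Q) (hf : ∀ q, f (f q) = q) :
    ∃ c : Q → Fin 2, ∀ q, f q ≠ q → c (f q) ≠ c q := by
  classical
  let s : Setoid Q :=
    ⟨fun a b => b = a ∨ b = f a, by
      constructor
      · intro a; exact Or.inl rfl
      · rintro a b (rfl | rfl)
        · exact Or.inl rfl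
        · right; rw [hf]
      · rintro a b c (rfl | rfl) h
        · exact h
        · rcases h with rfl | rfl
          · exact Or.inr rfl
          · left; rw [hf]⟩
  refine ⟨fun q => if (Quotient.mk s q).out = q then 0 else 1, fun q hq => ?_⟩
  have h1 : Quotient.mk s (f q) = Quotient.mk s q :=
    Quotient.sound (Or.inr (hf q).symm)
  have h2 : (Quotient.mk s q).out = q ∨ (Quotient.mk s q).out = f q := by
    have hr := Quotient.mk_out (s := s) q
    rcases hr with h | h
    · exact Or.inl h.symm
    · right
      generalize (Quotient.mk s q).out = o at h ⊢
      rw [h, hf]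
  show (if (Quotient.mk s (f q)).out = f q then (0 : Fin 2) else 1)
      ≠ (if (Quotient.mk s q).out = q then (0 : Fin 2) else 1)
  rw [h1]
  rcases h2 with h | h
  · rw [if_pos h, if_neg (fun e => hq (e.symm.trans h))]
    decide
  · rw [if_pos h, if_neg (fun e => hq (h.symm.trans e))]
    decide


lemma stmt6_card_closure_lt {G : Type} [AddCommGroup G] [Uncountable G]
    (S : Set G) (hS : #S < #G) : #(AddSubgroup.closure S : Set G) < #G := by
  classical
  have hk : ℵ₀ < #G := aleph0_lt_mk
  set T : Set G := S ∪ -S with hT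
  have hsub : (AddSubgroup.closure S : Set G) ⊆
      Set.range (fun l : List T => (l.map Subtype.val).sum) := by
    intro x hx
    have hx' : x ∈ AddSubmonoid.closure T := by
      rw [SetLike.mem_coe, ← AddSubgroup.mem_toAddSubmonoid, AddSubgroup.closure_toAddSubmonoid S] at hx
      exact hx
    obtain ⟨l, hl, rfl⟩ := AddSubmonoid.exists_list_of_mem_closure hx'
    refine ⟨l.attach.map (fun y => (⟨y.1, hl y.1 y.2⟩ : T)), ?_⟩
    simp [List.map_map, Function.comp]
  have hnegS : #(-S : Set G) ≤ #S := by
    refine mk_le_of_injective (f := fun x : (-S : Set G) => (⟨-x.1, x.2⟩ : S)) ?_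
    intro a b hab
    have := congrArg Subtype.val hab
    simp only at this
    exact Subtype.ext (neg_inj.mp this)
  calc #(AddSubgroup.closure S : Set G)
      ≤ #(Set.range (fun l : List T => (l.map Subtype.val).sum)) := mk_le_mk_of_subset hsub
    _ ≤ #(List T) := mk_range_le
    _ ≤ max ℵ₀ #T := mk_list_le_max T
    _ < #G := by
        apply max_lt hk
        apply lt_of_le_of_lt (mk_union_le _ _)
        exact add_lt_of_lt hk.le hS (lt_of_le_of_lt hnegS hS)


lemma stmt6_card_purify_lt {G : Type} [AddCommGroup G] [Uncountable G]
    (hB : #{g : G // 2 • g = 0} < #G) (S : Set G) (hS : #S < #G) :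
    #{g : G | ∃ n : ℕ, 2 ^ n • g ∈ AddSubgroup.closure S} < #G := by
  classical
  have hk : ℵ₀ < #G := aleph0_lt_mk
  set ν : Cardinal := max ℵ₀ #{g : G // 2 • g = 0} with hν
  have hνlt : ν < #G := max_lt hk hB
  have hνinf : ℵ₀ ≤ ν := le_max_left _ _
  -- kernels are small
  have hker : ∀ n : ℕ, #{g : G // 2 ^ n • g = 0} ≤ ν := by
    intro n
    induction n with
    | zero =>
      have : Subsingleton {g : G // 2 ^ 0 • g = 0} := by
        constructor
        rintro ⟨a, ha⟩ ⟨b, hb⟩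
        simp only [pow_zero, one_smul] at ha hb
        simp [ha, hb]
      exact (mk_le_aleph0).trans hνinf
    | succ n ih =>
      set f : {g : G // 2 ^ (n+1) • g = 0} → {g : G // 2 ^ n • g = 0} :=
        fun g => ⟨2 • g.1, by rw [smul_smul, ← pow_succ]; exact g.2⟩ with hf
      have hfib : ∀ b, #(f ⁻¹' {b}) ≤ #{g : G // 2 • g = 0} := by
        intro b
        rcases isEmpty_or_nonempty (f ⁻¹' {b}) with he | ⟨⟨g₀, hg₀⟩⟩
        · simp [mk_eq_zero]
        · refine mk_le_of_injective
            (f := fun d : (f ⁻¹' {b}) => (⟨d.1.1 - g₀.1, ?_⟩ : {g : G // 2 • g = 0})) ?_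
          · have h1 : 2 • d.1.1 = b.1 := congrArg Subtype.val d.2
            have h2 : 2 • g₀.1 = b.1 := congrArg Subtype.val hg₀
            rw [smul_sub, h1, h2, sub_self]
          · intro a b hab
            have := congrArg Subtype.val hab
            simp only [sub_left_inj] at this
            exact Subtype.ext (Subtype.ext this)
      calc #{g : G // 2 ^ (n+1) • g = 0}
          ≤ #{g : G // 2 ^ n • g = 0} * #{g : G // 2 • g = 0} :=
            mk_le_mk_mul_of_mk_preimage_le f hfib
        _ ≤ ν * ν := mul_le_mul' ih (le_max_right _ _)
        _ = ν := mul_eq_self hνinf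
  -- the purified set is a countable union of preimages
  have hU : {g : G | ∃ n : ℕ, 2 ^ n • g ∈ AddSubgroup.closure S} =
      ⋃ n : ℕ, (fun g : G => 2 ^ n • g) ⁻¹' (AddSubgroup.closure S : Set G) := by
    ext g; simp [Set.mem_iUnion]
  rw [hU]
  have hC : #(AddSubgroup.closure S : Set G) < #G := stmt6_card_closure_lt S hS
  have hpre : ∀ n : ℕ, #((fun g : G => 2 ^ n • g) ⁻¹' (AddSubgroup.closure S : Set G))
      ≤ #(AddSubgroup.closure S : Set G) * ν := by
    intro n
    set P := (fun g : G => 2 ^ n • g) ⁻¹' (AddSubgroup.closure S : Set G) with hP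
    set f : P → (AddSubgroup.closure S : Set G) := fun g => ⟨2 ^ n • g.1, g.2⟩ with hf
    have hfib : ∀ b, #(f ⁻¹' {b}) ≤ ν := by
      intro b
      rcases isEmpty_or_nonempty (f ⁻¹' {b}) with he | ⟨⟨g₀, hg₀⟩⟩
      · simp [mk_eq_zero]
      · have key : #(f ⁻¹' {b}) ≤ #{g : G // 2 ^ n • g = 0} := by
          refine mk_le_of_injective
            (f := fun d : (f ⁻¹' {b}) => (⟨d.1.1 - g₀.1, ?_⟩ : {g : G // 2 ^ n • g = 0})) ?_
          · have h1 : 2 ^ n • d.1.1 = b.1 := congrArg Subtype.val d.2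
            have h2 : 2 ^ n • g₀.1 = b.1 := congrArg Subtype.val hg₀
            rw [smul_sub, h1, h2, sub_self]
          · intro a b hab
            have := congrArg Subtype.val hab
            simp only [sub_left_inj] at this
            exact Subtype.ext (Subtype.ext this)
        exact key.trans (hker n)
    exact mk_le_mk_mul_of_mk_preimage_le f hfib
  calc #(⋃ n : ℕ, (fun g : G => 2 ^ n • g) ⁻¹' (AddSubgroup.closure S : Set G))
      ≤ #ℕ * ⨆ n : ℕ, #((fun g : G => 2 ^ n • g) ⁻¹' (AddSubgroup.closure S : Set G)) :=
        mk_iUnion_le _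
    _ ≤ #ℕ * (#(AddSubgroup.closure S : Set G) * ν) := by
        apply mul_le_mul' le_rfl
        exact ciSup_le' hpre
    _ < #G := by
        rw [mk_nat]
        exact mul_lt_of_lt hk.le hk (mul_lt_of_lt hk.le hC hνlt)

theorem stmt_6 (G : Type) [AddCommGroup G] [Uncountable G]
    (hB : Cardinal.mk {g : G // 2 • g = 0} < Cardinal.mk G) :
    ∃ χ : G → Fin 2, ∀ A : Set G, (∃ c, ∀ a ∈ A, χ a = c) →
      (∃ x : G, A = (fun a => 2 • x - a) '' A) → Cardinal.mk A < Cardinal.mk G := by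
  classical
  have hk : ℵ₀ < #G := aleph0_lt_mk
  obtain ⟨e⟩ : Nonempty ((#G).ord.ToType ≃ G) := by
    rw [← Cardinal.eq, mk_toType, card_ord]
  let C : (#G).ord.ToType → AddSubgroup G := fun i => AddSubgroup.closure (e '' Iic i)
  let D : (#G).ord.ToType → AddSubgroup G := fun i => AddSubgroup.closure (e '' Iio i)
  -- generic facts about purified membership
  have Pzero : ∀ H : AddSubgroup G, ∃ n : ℕ, 2 ^ n • (0 : G) ∈ H := fun H => ⟨0, by simpa using H.zero_mem⟩
  have Pneg : ∀ (H : AddSubgroup G) (g : G), (∃ n : ℕ, 2 ^ n • g ∈ H) →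
      ∃ n : ℕ, 2 ^ n • (-g) ∈ H := by
    rintro H g ⟨n, hn⟩; exact ⟨n, by rw [smul_neg]; exact H.neg_mem hn⟩
  have Padd : ∀ (H : AddSubgroup G) (g h : G), (∃ n : ℕ, 2 ^ n • g ∈ H) →
      (∃ n : ℕ, 2 ^ n • h ∈ H) → ∃ n : ℕ, 2 ^ n • (g + h) ∈ H := by
    rintro H g h ⟨n, hn⟩ ⟨p, hp⟩
    refine ⟨n + p, ?_⟩
    rw [smul_add]
    refine H.add_mem ?_ ?_
    · rw [pow_add, mul_comm, mul_smul]; exact H.nsmul_mem hn _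
    · rw [pow_add, mul_smul]; exact H.nsmul_mem hp _
  have Psub : ∀ (H : AddSubgroup G) (g h : G), (∃ n : ℕ, 2 ^ n • g ∈ H) →
      (∃ n : ℕ, 2 ^ n • h ∈ H) → ∃ n : ℕ, 2 ^ n • (g - h) ∈ H := by
    intro H g h hg hh
    rw [sub_eq_add_neg]; exact Padd H _ _ hg (Pneg H _ hh)
  have Phalf : ∀ (H : AddSubgroup G) (g : G), (∃ n : ℕ, 2 ^ n • ((2:ℕ) • g) ∈ H) →
      ∃ n : ℕ, 2 ^ n • g ∈ H := by
    rintro H g ⟨n, hn⟩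
    exact ⟨n + 1, by rw [pow_succ, mul_smul]; exact hn⟩
  -- monotonicity
  have hCmono : ∀ {i j}, i ≤ j → C i ≤ C j := fun hij =>
    AddSubgroup.closure_mono (Set.image_mono (Iic_subset_Iic.mpr hij))
  have hDW : ∀ i, D i ≤ C i := fun i =>
    AddSubgroup.closure_mono (Set.image_mono Iio_subset_Iic_self)
  have hWself : ∀ g : G, ∃ n : ℕ, 2 ^ n • g ∈ C (e.symm g) := fun g =>
    ⟨0, by
      rw [pow_zero, one_smul]
      exact AddSubgroup.subset_closure ⟨e.symm g, Set.mem_Iic.mpr le_rfl, e.apply_symm_apply g⟩⟩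
  have wf : WellFounded ((· < ·) : (#G).ord.ToType → (#G).ord.ToType → Prop) :=
    wellFounded_lt
  have hex : ∀ g : G, {i | ∃ n : ℕ, 2 ^ n • g ∈ C i}.Nonempty :=
    fun g => ⟨e.symm g, hWself g⟩
  let m : G → (#G).ord.ToType := fun g => wf.min {i | ∃ n : ℕ, 2 ^ n • g ∈ C i} (hex g)
  have hmW : ∀ g, ∃ n : ℕ, 2 ^ n • g ∈ C (m g) := fun g => wf.min_mem _ (hex g)
  have hmle : ∀ g i, (∃ n : ℕ, 2 ^ n • g ∈ C i) → m g ≤ i := fun g i h =>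
    not_lt.mp (wf.not_lt_min _ h)
  have hmneg : ∀ g : G, m (-g) = m g := by
    intro g
    apply le_antisymm
    · exact hmle _ _ (Pneg _ _ (hmW g))
    · have h := Pneg _ _ (hmW (-g))
      rw [neg_neg] at h
      exact hmle _ _ h
  -- no element escapes below its own level, unless 2-power-torsion
  have hkey : ∀ g : G, (¬ ∃ n : ℕ, 2 ^ n • g = 0) →
      ¬ ∃ n : ℕ, 2 ^ n • g ∈ D (m g) := by
    rintro g hT ⟨n, hn⟩
    rcases isEmpty_or_nonempty {j // j < m g} with he | hne
    · have h0 : Iio (m g) = (∅ : Set _) := by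
        ext j
        simp only [mem_Iio, mem_empty_iff_false, iff_false]
        exact fun h => he.elim ⟨j, h⟩
      have : 2 ^ n • g = 0 := by
        have hn' : 2 ^ n • g ∈ AddSubgroup.closure (e '' Iio (m g)) := hn
        rw [h0] at hn'
        simpa [AddSubgroup.closure_empty, AddSubgroup.mem_bot] using hn'
      exact hT ⟨n, this⟩
    · have hiio : e '' Iio (m g) = ⋃ j : {j // j < m g}, e '' Iic j.1 := by
        ext y
        constructor
        · rintro ⟨z, hz, rfl⟩
          exact Set.mem_iUnion.mpr ⟨⟨z, hz⟩, ⟨z, Set.mem_Iic.mpr le_rfl, rfl⟩⟩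
        · intro hy
          rw [Set.mem_iUnion] at hy
          obtain ⟨j, z, hz, rfl⟩ := hy
          exact ⟨z, lt_of_le_of_lt (Set.mem_Iic.mp hz) j.2, rfl⟩
      have hdir : Directed (· ≤ ·) (fun j : {j // j < m g} => C j.1) := by
        intro j k
        rcases le_total j.1 k.1 with h | h
        · exact ⟨k, hCmono h, le_rfl⟩
        · exact ⟨j, le_rfl, hCmono h⟩
      have hmem : 2 ^ n • g ∈ ⨆ j : {j // j < m g}, C j.1 := by
        have hn' : 2 ^ n • g ∈ AddSubgroup.closure (e '' Iio (m g)) := hn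
        rw [hiio, AddSubgroup.closure_iUnion] at hn'
        exact hn'
      rw [AddSubgroup.mem_iSup_of_directed hdir] at hmem
      obtain ⟨j, hj⟩ := hmem
      exact absurd j.2 (not_lt.mpr (hmle g j.1 ⟨n, hj⟩))
  -- the equivalence relation
  have eqv : Equivalence (fun g h : G => m g = m h ∧ ∃ n : ℕ, 2 ^ n • (g - h) ∈ D (m g)) := by
    constructor
    · intro g; exact ⟨rfl, by rw [sub_self]; exact Pzero _⟩
    · rintro g h ⟨h1, h2⟩
      refine ⟨h1.symm, ?_⟩
      rw [← h1, ← neg_sub g h]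
      exact Pneg _ _ h2
    · rintro g h k ⟨h1, h2⟩ ⟨h3, h4⟩
      refine ⟨h1.trans h3, ?_⟩
      have h5 := Padd _ _ _ h2 (by rw [h1]; exact h4)
      rwa [sub_add_sub_cancel] at h5
  let s : Setoid G := ⟨_, eqv⟩
  have hcompat : ∀ g h : G, (m g = m h ∧ ∃ n : ℕ, 2 ^ n • (g - h) ∈ D (m g)) →
      (m (-g) = m (-h) ∧ ∃ n : ℕ, 2 ^ n • (-g - -h) ∈ D (m (-g))) := by
    rintro g h ⟨h1, h2⟩
    refine ⟨by rw [hmneg, hmneg, h1], ?_⟩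
    rw [hmneg, show -g - -h = -(g - h) by abel]
    exact Pneg _ _ h2
  let ν : Quotient s → Quotient s := Quotient.map (fun g => -g) hcompat
  have hν : ∀ q, ν (ν q) = q := by
    intro q
    induction q using Quotient.ind
    show Quotient.mk s (- - _) = _
    rw [neg_neg]
  obtain ⟨c, hc⟩ := stmt6_invol_coloring ν hν
  refine ⟨fun g => c (Quotient.mk s g), ?_⟩
  rintro A ⟨c₀, hc₀⟩ ⟨x, hx⟩
  -- main containment
  have hmain : A ⊆ {g : G | ∃ n : ℕ, 2 ^ n • g ∈ C (e.symm x)} ∪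
      {g : G | ∃ n : ℕ, 2 ^ n • g = 0} := by
    intro a ha
    by_contra hcon
    rw [Set.mem_union] at hcon
    push_neg at hcon
    obtain ⟨ha1, ha2⟩ := hcon
    rw [Set.mem_setOf_eq] at ha1 ha2
    set b := 2 • x - a with hb
    have hbA : b ∈ A := by
      rw [hx]; exact Set.mem_image_of_mem _ ha
    have hxi : e.symm x < m a := by
      by_contra h
      push_neg at h
      obtain ⟨n, hn⟩ := hmW a
      exact ha1 ⟨n, hCmono h hn⟩
    have hVx : ∃ n : ℕ, 2 ^ n • x ∈ D (m a) := ⟨0, by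
      rw [pow_zero, one_smul]
      exact AddSubgroup.subset_closure ⟨e.symm x, hxi, e.apply_symm_apply x⟩⟩
    have hV2x : ∃ n : ℕ, 2 ^ n • ((2:ℕ) • x) ∈ D (m a) := by
      rw [two_nsmul]
      exact Padd _ _ _ hVx hVx
    have hW2x : ∃ n : ℕ, 2 ^ n • ((2:ℕ) • x) ∈ C (m a) := by
      obtain ⟨n, hn⟩ := hV2x
      exact ⟨n, hDW _ hn⟩
    have hWb : ∃ n : ℕ, 2 ^ n • b ∈ C (m a) := Psub _ _ _ hW2x (hmW a)
    have hmb : m b = m a := by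
      rcases lt_or_ge (m b) (m a) with hlt | hle
      · exfalso
        rcases lt_or_ge (e.symm x) (m b) with h1 | h1
        · have hVx' : ∃ n : ℕ, 2 ^ n • x ∈ C (m b) := ⟨0, by
            rw [pow_zero, one_smul]
            exact AddSubgroup.subset_closure
              ⟨e.symm x, Set.mem_Iic.mpr h1.le, e.apply_symm_apply x⟩⟩
          have hW2x' : ∃ n : ℕ, 2 ^ n • ((2:ℕ) • x) ∈ C (m b) := by
            rw [two_nsmul]; exact Padd _ _ _ hVx' hVx'
          have hWa' : ∃ n : ℕ, 2 ^ n • a ∈ C (m b) := by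
            have h2 := Psub _ _ _ hW2x' (hmW b)
            rwa [hb, sub_sub_cancel] at h2
          exact absurd (hmle a _ hWa') (not_le.mpr hlt)
        · have hWb' : ∃ n : ℕ, 2 ^ n • b ∈ C (e.symm x) := by
            obtain ⟨n, hn⟩ := hmW b
            exact ⟨n, hCmono h1 hn⟩
          have hW2x'' : ∃ n : ℕ, 2 ^ n • ((2:ℕ) • x) ∈ C (e.symm x) := by
            rw [two_nsmul]; exact Padd _ _ _ (hWself x) (hWself x)
          have h2 := Psub _ _ _ hW2x'' hWb'
          rw [hb, sub_sub_cancel] at h2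
          exact ha1 h2
      · exact le_antisymm (hmle _ _ hWb) hle
    have hqb : Quotient.mk s b = Quotient.mk s (-a) := by
      refine Quotient.sound ⟨by rw [hmb, hmneg], ?_⟩
      rw [hmb, show b - -a = (2:ℕ) • x by rw [hb]; abel]
      exact hV2x
    have hνa : ν (Quotient.mk s a) = Quotient.mk s (-a) := rfl
    have hfix : ν (Quotient.mk s a) ≠ Quotient.mk s a := by
      rw [hνa]
      intro hcontra
      obtain ⟨h1, h2⟩ := Quotient.exact hcontra
      rw [hmneg] at h2
      have h3 : ∃ n : ℕ, 2 ^ n • ((2:ℕ) • a) ∈ D (m a) := by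
        have h4 := Pneg _ _ h2
        rwa [show -(-a - a) = (2:ℕ) • a by rw [two_nsmul]; abel] at h4
      exact hkey a ha2 (by
        have h5 := Phalf _ _ h3
        obtain ⟨n, hn⟩ := h5
        exact ⟨n, hn⟩)
    have hcb : c (Quotient.mk s b) ≠ c (Quotient.mk s a) := by
      rw [hqb, ← hνa]
      exact hc _ hfix
    exact hcb ((hc₀ _ hbA).trans (hc₀ a ha).symm)
  -- cardinality bound
  have h1 : #{g : G | ∃ n : ℕ, 2 ^ n • g ∈ C (e.symm x)} < #G := by
    apply stmt6_card_purify_lt hB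
    calc #(e '' Iic (e.symm x) : Set G) ≤ #(Iic (e.symm x)) := mk_image_le
      _ ≤ #(Iio (e.symm x)) + 1 := by
          rw [← Iio_insert]
          exact (mk_insert_le).trans (by rfl)
      _ < #G := add_lt_of_lt hk.le (mk_Iio_ord_toType _) (one_lt_aleph0.trans hk)
  have h2 : #{g : G | ∃ n : ℕ, 2 ^ n • g = 0} < #G := by
    have hEq : {g : G | ∃ n : ℕ, 2 ^ n • g = 0} =
        {g : G | ∃ n : ℕ, 2 ^ n • g ∈ AddSubgroup.closure (∅ : Set G)} := by
      simp [AddSubgroup.closure_empty, AddSubgroup.mem_bot]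
    rw [hEq]
    apply stmt6_card_purify_lt hB
    rw [mk_emptyCollection]
    exact aleph0_pos.trans hk
  calc #A ≤ #({g : G | ∃ n : ℕ, 2 ^ n • g ∈ C (e.symm x)} ∪
        {g : G | ∃ n : ℕ, 2 ^ n • g = 0} : Set G) := mk_le_mk_of_subset hmain
    _ ≤ #{g : G | ∃ n : ℕ, 2 ^ n • g ∈ C (e.symm x)} +
        #{g : G | ∃ n : ℕ, 2 ^ n • g = 0} := mk_union_le _ _
    _ < #G := add_lt_of_lt hk.le h1 h2
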